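/- Let C be a category and let F, G : C^op → Cat be (strict) functors to the category of small categories. For a morphism β : c → d in C write β* : F(d) → F(c) (resp. β* : G(d) → G(c)) for the functor F(β) (resp. G(β)). Suppose α : G ⟶ F is a natural transformation such that for every object c of C the component functor α_c : G(c) → F(c) admits a left adjoint L_c : F(c) → G(c). Let R : ∫_C G → ∫_C F denote the integrated functor which sends an object (c, A) to (c, α_c(A)) and a morphism (β, f) : (c, A) → (d, B) — consisting of β : c → d in C and f : A → β*B in G(c) — to the pair (β, α_c(A) → α_c(β*B) ≅ β*(α_d(B))), where the isomorphism comes from the naturality of α. Then R admits a left adjoint L : ∫_C F → ∫_C G; on objects, L sends (c, X) to (c, L_c(X)), and on a morphism (β, g) : (c, X) → (d, Y) it is given by the pair (β, g̃), where g̃ : L_c(X) → β*(L_d(Y)) is the adjoint of the composite X → β*Y → β*(α_d L_d(Y)) ≅ α_c(β* L_d(Y)) (the second map being β* applied to the unit of L_d ⊣ α_d). -/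

import Mathlib

/-!
Statement 0: Given strict functors `F G : Cᵒᵖ ⥤ Cat` and a natural transformation
`α : G ⟶ F` all of whose components admit left adjoints, the integrated functor
`R : ∫ G ⥤ ∫ F` between the contravariant Grothendieck constructions (sending
`(c, A)` to `(c, α_c A)`) admits a left adjoint `L`, which on objects sends
`(c, X)` to `(c, L_c X)`.
-/

open CategoryTheory Opposite

universe v₂ u₂ v₁ u₁

namespace ContraGrothendieckAdjunction

/-- The functor `Cat ⥤ Cat` sending a category to its opposite category and a functor to
its opposite functor. -/
def catOp : Cat.{v₂, u₂} ⥤ Cat.{v₂, u₂} where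
  obj C := Cat.of Cᵒᵖ
  map F := (Functor.op F.toFunctor).toCatHom

variable {C : Type u₁} [Category.{v₁} C]

/-- The contravariant Grothendieck construction `∫_C F` of a (strict) functor
`F : Cᵒᵖ ⥤ Cat`: its objects are pairs `(c, X)` with `c : C` and `X : F c`, and a morphism
`(c, X) ⟶ (d, Y)` is a pair `(β, g)` with `β : c ⟶ d` in `C` and `g : X ⟶ β* Y` in `F c`,
where `β* = F.map β.op`.  It is realized here as the opposite category of the (covariant)
Grothendieck construction of `F ⋙ catOp : Cᵒᵖ ⥤ Cat`. -/
def ContraGrothendieck (F : Cᵒᵖ ⥤ Cat.{v₂, u₂}) : Type max u₁ u₂ :=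
  (Grothendieck (F ⋙ catOp))ᵒᵖ

instance (F : Cᵒᵖ ⥤ Cat.{v₂, u₂}) : Category (ContraGrothendieck F) :=
  inferInstanceAs (Category (Grothendieck (F ⋙ catOp))ᵒᵖ)

/-- The object of the contravariant Grothendieck construction `∫_C F` corresponding to a
pair `(c, X)` with `X : F c`. -/
def ContraGrothendieck.mk (F : Cᵒᵖ ⥤ Cat.{v₂, u₂}) (c : Cᵒᵖ) (X : F.obj c) :
    ContraGrothendieck F :=
  op ⟨c, show (F ⋙ catOp).obj c from op X⟩

/-- The integrated functor `R : ∫_C G ⥤ ∫_C F` associated to a natural transformation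
`α : G ⟶ F`: it sends an object `(c, A)` to `(c, α_c A)`, and a morphism
`(β, f : A ⟶ β* B)` to `(β, α_c A ⟶ α_c (β* B) = β* (α_d B))`, the identification coming
from the (strict) naturality of `α`. -/
def integrated {F G : Cᵒᵖ ⥤ Cat.{v₂, u₂}} (α : G ⟶ F) :
    ContraGrothendieck G ⥤ ContraGrothendieck F :=
  (Grothendieck.map (Functor.whiskerRight α catOp)).op

section Aux

variable {F G : Cᵒᵖ ⥤ Cat.{v₂, u₂}} (α : G ⟶ F)
  (Ladj : ∀ c : Cᵒᵖ, (F.obj c : Cat) ⥤ (G.obj c : Cat))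
  (adj : ∀ c : Cᵒᵖ, Ladj c ⊣ ((α.app c).toFunctor : (G.obj c : Cat) ⥤ (F.obj c : Cat)))

lemma nat_obj {c d : Cᵒᵖ} (β : d ⟶ c) (B : G.obj d) :
    (α.app c).toFunctor.obj ((G.map β).toFunctor.obj B) =
      (F.map β).toFunctor.obj ((α.app d).toFunctor.obj B) :=
  Functor.congr_obj congr($(α.naturality β).toFunctor) B

/-- Object part of the left adjoint. -/
def Lobj (X : ContraGrothendieck F) : ContraGrothendieck G :=
  op ⟨X.unop.base, show (G ⋙ catOp).obj X.unop.base from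
    op ((Ladj X.unop.base).obj (X.unop.fiber : (F.obj X.unop.base)ᵒᵖ).unop)⟩

/-- The Grothendieck-level forward map of the hom equivalence. -/
def eG {c : Cᵒᵖ} (A : F.obj c) (Yg : Grothendieck (G ⋙ catOp))
    (f : Yg ⟶ (⟨c, show (G ⋙ catOp).obj c from op ((Ladj c).obj A)⟩ : Grothendieck (G ⋙ catOp))) :
    (Grothendieck.map (Functor.whiskerRight α catOp)).obj Yg ⟶
      (⟨c, show (F ⋙ catOp).obj c from op A⟩ : Grothendieck (F ⋙ catOp)) :=
  ⟨f.base,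
    Quiver.Hom.op
      (((adj c).homEquiv A ((G.map f.base).toFunctor.obj (Yg.fiber : (G.obj Yg.base)ᵒᵖ).unop) f.fiber.unop) ≫
        eqToHom (nat_obj α f.base (Yg.fiber : (G.obj Yg.base)ᵒᵖ).unop))⟩

lemma eG_key {c b b' : Cᵒᵖ} (A : F.obj c) (qb : b ⟶ c) (pb : b' ⟶ b) (y : G.obj b)
    (y' : G.obj b')
    (u : op ((G.map qb).toFunctor.obj y) ⟶ op ((Ladj c).obj A))
    (v : op ((G.map pb).toFunctor.obj y') ⟶ op y)
    (e0 : op ((G.map (pb ≫ qb)).toFunctor.obj y') ⟶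
      op ((G.map qb).toFunctor.obj ((G.map pb).toFunctor.obj y')))
    (h0 : (G.map qb).toFunctor.obj ((G.map pb).toFunctor.obj y') = (G.map (pb ≫ qb)).toFunctor.obj y')
    (he0 : e0.unop = eqToHom h0)
    (w : op ((F.map pb).toFunctor.obj ((α.app b').toFunctor.obj y')) ⟶
      op ((α.app b).toFunctor.obj ((G.map pb).toFunctor.obj y')))
    (hw' : (α.app b).toFunctor.obj ((G.map pb).toFunctor.obj y') =
      (F.map pb).toFunctor.obj ((α.app b').toFunctor.obj y'))
    (hw : w.unop = eqToHom hw')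
    (e3 : op ((F.map (pb ≫ qb)).toFunctor.obj ((α.app b').toFunctor.obj y')) ⟶
      op ((F.map qb).toFunctor.obj ((F.map pb).toFunctor.obj ((α.app b').toFunctor.obj y'))))
    (h3 : (F.map qb).toFunctor.obj ((F.map pb).toFunctor.obj ((α.app b').toFunctor.obj y')) =
      (F.map (pb ≫ qb)).toFunctor.obj ((α.app b').toFunctor.obj y'))
    (he3 : e3.unop = eqToHom h3) :
    (adj c).homEquiv A ((G.map (pb ≫ qb)).toFunctor.obj y')
        (e0 ≫ (G.map qb).toFunctor.op.map v ≫ u).unop ≫ eqToHom (nat_obj α (pb ≫ qb) y') =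
      (((adj c).homEquiv A ((G.map qb).toFunctor.obj y) u.unop ≫ eqToHom (nat_obj α qb y)) ≫
        (F.map qb).toFunctor.map (w ≫ (α.app b).toFunctor.op.map v).unop) ≫ e3.unop := by
  simp only [unop_comp, Functor.op_map, Quiver.Hom.unop_op, he0, hw, he3]
  rw [Adjunction.homEquiv_naturality_right, Adjunction.homEquiv_naturality_right]
  simp only [Functor.map_comp, eqToHom_map, Category.assoc]
  have h2 := Functor.congr_hom congr($(α.naturality qb).toFunctor) v.unop
  simp only [Cat.Hom.comp_toFunctor, Functor.comp_map] at h2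
  rw [h2]
  simp

theorem eG_nat {c : Cᵒᵖ} (A : F.obj c) {Yg' Yg : Grothendieck (G ⋙ catOp)}
    (p : Yg' ⟶ Yg) (q : Yg ⟶ (⟨c, show (G ⋙ catOp).obj c from op ((Ladj c).obj A)⟩ : Grothendieck (G ⋙ catOp))) :
    eG α Ladj adj A Yg' (p ≫ q) =
      (Grothendieck.map (Functor.whiskerRight α catOp)).map p ≫ eG α Ladj adj A Yg q := by
  fapply Grothendieck.ext
  · rfl
  · apply Quiver.Hom.unop_inj
    erw [eqToHom_refl, Category.id_comp]
    exact eG_key α Ladj adj A q.base p.base (unop Yg.fiber) (unop Yg'.fiber) q.fiber p.fiber _ _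
      (eqToHom_unop _) _ _ (by rw [Cat.eqToHom_app]; exact eqToHom_unop _) _ _ (eqToHom_unop _)

lemma aux_left {D E : Type*} [Category D] [Category E] {L : D ⥤ E} {R : E ⥤ D} (a : L ⊣ R)
    {x : D} {y : E} {z : D} (φ : L.obj x ⟶ y) (h : R.obj y = z) :
    (a.homEquiv x y).symm ((a.homEquiv x y φ ≫ eqToHom h) ≫ eqToHom h.symm) = φ := by
  simp

lemma aux_right {D E : Type*} [Category D] [Category E] {L : D ⥤ E} {R : E ⥤ D} (a : L ⊣ R)
    {x : D} {y : E} {z : D} (g : x ⟶ z) (h : R.obj y = z) :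
    a.homEquiv x y ((a.homEquiv x y).symm (g ≫ eqToHom h.symm)) ≫ eqToHom h = g := by
  simp

/-- The hom equivalence exhibiting `Lobj` as the object part of a left adjoint. -/
def homEquiv (X : ContraGrothendieck F) (Y : ContraGrothendieck G) :
    (Lobj Ladj X ⟶ Y) ≃ (X ⟶ (integrated α).obj Y) where
  toFun f := Quiver.Hom.op (eG α Ladj adj (X.unop.fiber : (F.obj X.unop.base)ᵒᵖ).unop Y.unop f.unop)
  invFun g := Quiver.Hom.op
    (⟨g.unop.base,
      Quiver.Hom.op
        (((adj X.unop.base).homEquiv (X.unop.fiber : (F.obj X.unop.base)ᵒᵖ).unop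
            ((G.map g.unop.base).toFunctor.obj (Y.unop.fiber : (G.obj Y.unop.base)ᵒᵖ).unop)).symm
          (g.unop.fiber.unop ≫ eqToHom (nat_obj α g.unop.base (Y.unop.fiber : (G.obj Y.unop.base)ᵒᵖ).unop).symm))⟩ :
      Grothendieck.Hom Y.unop (Lobj Ladj X).unop)
  left_inv f := by
    apply Quiver.Hom.unop_inj
    fapply Grothendieck.ext
    · rfl
    · apply Quiver.Hom.unop_inj
      erw [eqToHom_refl, Category.id_comp]
      dsimp only [eG, Quiver.Hom.unop, Quiver.Hom.op]
      exact aux_left _ _ _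
  right_inv g := by
    apply Quiver.Hom.unop_inj
    fapply Grothendieck.ext
    · rfl
    · apply Quiver.Hom.unop_inj
      refine (congrArg Quiver.Hom.unop (Category.id_comp _)).trans ?_
      dsimp only [eG, Quiver.Hom.unop, Quiver.Hom.op]
      exact aux_right _ _ _

theorem he (X : ContraGrothendieck F) (Y Y' : ContraGrothendieck G) (g : Y ⟶ Y')
    (h : Lobj Ladj X ⟶ Y) :
    homEquiv α Ladj adj X Y' (h ≫ g) = homEquiv α Ladj adj X Y h ≫ (integrated α).map g :=
  congrArg Quiver.Hom.op (eG_nat α Ladj adj (X.unop.fiber : (F.obj X.unop.base)ᵒᵖ).unop g.unop h.unop)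

end Aux

/-- If every component `α_c : G c ⥤ F c` of `α : G ⟶ F` admits a left adjoint
`L_c : F c ⥤ G c`, then the integrated functor `R = integrated α : ∫_C G ⥤ ∫_C F` admits a
left adjoint `L`, which on objects sends `(c, X)` to `(c, L_c X)`. -/
theorem integrated_hasLeftAdjoint {F G : Cᵒᵖ ⥤ Cat.{v₂, u₂}} (α : G ⟶ F)
    (Ladj : ∀ c : Cᵒᵖ, (F.obj c : Cat) ⥤ (G.obj c : Cat))
    (adj : ∀ c : Cᵒᵖ, Ladj c ⊣ ((α.app c).toFunctor : (G.obj c : Cat) ⥤ (F.obj c : Cat))) :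
    ∃ L : ContraGrothendieck F ⥤ ContraGrothendieck G,
      Nonempty (L ⊣ integrated α) ∧
        ∀ (c : Cᵒᵖ) (X : F.obj c),
          L.obj (ContraGrothendieck.mk F c X) =
            ContraGrothendieck.mk G c ((Ladj c).obj X) := by
  exact ⟨Adjunction.leftAdjointOfEquiv (homEquiv α Ladj adj) (he α Ladj adj),
    ⟨Adjunction.adjunctionOfEquivLeft _ _⟩, fun c X => rfl⟩

end ContraGrothendieckAdjunction
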